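/- Let A be a commutative ring, let K be a bounded cochain complex of flat A-modules with K^j = 0 for all j < 0, and let c ≥ 0 be an integer such that H^j(K) is a projective A-module for every j > c. Then for every A-module F there is an isomorphism of A-modules H^c(K ⊗_A F) ≅ H^c(K) ⊗_A F, where K ⊗_A F denotes the cochain complex with term K^j ⊗_A F in degree j and differentials d^j ⊗ id_F. -/

import Mathlib

open CategoryTheory CategoryTheory.Limits TensorProduct

universe u

/-- The cochain complex `K ⊗_A F`, with term `K^j ⊗_A F` in degree `j` and differentials
`d^j ⊗ id_F`. -/
noncomputable def tensorComplex {A : Type u} [CommRing A]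
    (K : CochainComplex (ModuleCat.{u} A) ℤ) (F : Type u) [AddCommGroup F] [Module A F] :
    CochainComplex (ModuleCat.{u} A) ℤ where
  X j := ModuleCat.of A (K.X j ⊗[A] F)
  d i j := ModuleCat.ofHom (LinearMap.rTensor F (K.d i j).hom)
  shape i j h := by
    have : K.d i j = 0 := K.shape i j h
    apply ModuleCat.hom_ext
    change LinearMap.rTensor F (K.d i j).hom = 0
    rw [this, ModuleCat.hom_zero, LinearMap.rTensor_zero]
  d_comp_d' i j k _ _ := by
    apply ModuleCat.hom_ext
    change ((K.d j k).hom.rTensor F).comp ((K.d i j).hom.rTensor F) = 0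
    rw [← LinearMap.rTensor_comp]
    have : (K.d j k).hom.comp (K.d i j).hom = 0 := by
      rw [← ModuleCat.hom_comp, K.d_comp_d i j k, ModuleCat.hom_zero]
    rw [this, LinearMap.rTensor_zero]

section Helpers

variable {A : Type u} [CommRing A]

/-- If `N ⧸ M` is flat, then `M ⊗ F → N ⊗ F` is injective for every `F`
(i.e. `M` is a pure submodule of `N`). -/
theorem rTensor_subtype_injective_of_flat_quotient_aux
    {N F : Type u} [AddCommGroup N] [Module A N] [AddCommGroup F] [Module A F]
    (M : Submodule A N) (hQ : Module.Flat A (N ⧸ M))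
    (P : Type u) [AddCommGroup P] [Module A P] [Module.Flat A P]
    (p : P →ₗ[A] F) (hpsurj : Function.Surjective p) :
    Function.Injective (LinearMap.rTensor F M.subtype) := by
  haveI := hQ
  rw [← LinearMap.ker_eq_bot, eq_bot_iff]
  intro x hx
  rw [LinearMap.mem_ker] at hx
  obtain ⟨x', hx'⟩ := LinearMap.lTensor_surjective (↥M) hpsurj x
  set y : N ⊗[A] P := LinearMap.rTensor P M.subtype x' with hy
  have comm1 : (LinearMap.lTensor N p).comp (LinearMap.rTensor P M.subtype)
      = (LinearMap.rTensor F M.subtype).comp (LinearMap.lTensor (↥M) p) := by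
    rw [LinearMap.lTensor_comp_rTensor, LinearMap.rTensor_comp_lTensor]
  have hy0 : LinearMap.lTensor N p y = 0 := by
    rw [hy, ← LinearMap.comp_apply, comm1, LinearMap.comp_apply, hx', hx]
  obtain ⟨z, hz⟩ :=
    ((lTensor_exact (R := A) (M := ↥(LinearMap.ker p)) N
      p.exact_subtype_ker_map hpsurj) y).mp hy0
  have comm2 : (LinearMap.lTensor (N ⧸ M) (LinearMap.ker p).subtype).comp
        (LinearMap.rTensor (↥(LinearMap.ker p)) M.mkQ)
      = (LinearMap.rTensor P M.mkQ).comp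
        (LinearMap.lTensor N (LinearMap.ker p).subtype) := by
    rw [LinearMap.lTensor_comp_rTensor, LinearMap.rTensor_comp_lTensor]
  have hz2 : LinearMap.rTensor (↥(LinearMap.ker p)) M.mkQ z = 0 := by
    have hinjq : Function.Injective
        (LinearMap.lTensor (N ⧸ M) (LinearMap.ker p).subtype) :=
      Module.Flat.lTensor_preserves_injective_linearMap (M := N ⧸ M)
        (LinearMap.ker p).subtype (Submodule.injective_subtype _)
    apply hinjq
    rw [map_zero, ← LinearMap.comp_apply, comm2, LinearMap.comp_apply, hz, hy,
      ← LinearMap.comp_apply, ← LinearMap.rTensor_comp]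
    have : M.mkQ.comp M.subtype = 0 := by
      ext m; simp
    rw [this, LinearMap.rTensor_zero, LinearMap.zero_apply]
  obtain ⟨w, hw⟩ :=
    ((rTensor_exact (R := A) (M := ↥M) (N := N) (↥(LinearMap.ker p))
      (LinearMap.exact_subtype_mkQ M) (Submodule.mkQ_surjective M)) z).mp hz2
  have comm3 : (LinearMap.rTensor P M.subtype).comp
        (LinearMap.lTensor (↥M) (LinearMap.ker p).subtype)
      = (LinearMap.lTensor N (LinearMap.ker p).subtype).comp
        (LinearMap.rTensor (↥(LinearMap.ker p)) M.subtype) := by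
    rw [LinearMap.rTensor_comp_lTensor, LinearMap.lTensor_comp_rTensor]
  have hinj : Function.Injective (LinearMap.rTensor P M.subtype) :=
    Module.Flat.rTensor_preserves_injective_linearMap (M := P) M.subtype
      (Submodule.injective_subtype _)
  have hx'' : x' = LinearMap.lTensor (↥M) (LinearMap.ker p).subtype w := by
    apply hinj
    conv_rhs => rw [← LinearMap.comp_apply, comm3, LinearMap.comp_apply, hw]
    exact hz.symm
  have : x = 0 := by
    rw [← hx', hx'', ← LinearMap.comp_apply, ← LinearMap.lTensor_comp]
    have : p.comp (LinearMap.ker p).subtype = 0 := by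
      ext m; exact m.2
    rw [this, LinearMap.lTensor_zero, LinearMap.zero_apply]
  simp [this]

/-- If `N ⧸ M` is flat, then `M ⊗ F → N ⊗ F` is injective for every `F`
(i.e. `M` is a pure submodule of `N`). -/
theorem rTensor_subtype_injective_of_flat_quotient
    {N F : Type u} [AddCommGroup N] [Module A N] [AddCommGroup F] [Module A F]
    (M : Submodule A N) (hQ : Module.Flat A (N ⧸ M)) :
    Function.Injective (LinearMap.rTensor F M.subtype) :=
  rTensor_subtype_injective_of_flat_quotient_aux M hQ (F →₀ A)
    (Finsupp.linearCombination A _root_.id)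
    (Finsupp.linearCombination_id_surjective A F)

/-- If `N` is flat and `N ⧸ M` is flat, then the submodule `M` is flat. -/
theorem flat_submodule_of_flat_quotient
    {N : Type u} [AddCommGroup N] [Module A N]
    (M : Submodule A N) (hN : Module.Flat A N) (hQ : Module.Flat A (N ⧸ M)) :
    Module.Flat A ↥M := by
  haveI := hN; haveI := hQ
  rw [Module.Flat.iff_rTensor_injective']
  intro I
  have h1 : Function.Injective (LinearMap.lTensor (↥I) M.subtype) :=
    (LinearMap.lTensor_inj_iff_rTensor_inj _ _).mpr
      (rTensor_subtype_injective_of_flat_quotient M hQ)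
  have h2 : Function.Injective (LinearMap.rTensor N I.subtype) :=
    Module.Flat.iff_rTensor_injective'.mp hN I
  have comm : (LinearMap.lTensor A M.subtype).comp (LinearMap.rTensor (↥M) I.subtype)
      = (LinearMap.rTensor N I.subtype).comp (LinearMap.lTensor (↥I) M.subtype) := by
    rw [LinearMap.lTensor_comp_rTensor, LinearMap.rTensor_comp_lTensor]
  have : Function.Injective
      ((LinearMap.lTensor A M.subtype).comp (LinearMap.rTensor (↥M) I.subtype)) := by
    rw [comm]; exact h2.comp h1
  exact Function.Injective.of_comp this

/-- If a submodule `M` and the quotient `N ⧸ M` are flat, then `N` is flat. -/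
theorem flat_of_flat_submodule_flat_quotient
    {N : Type u} [AddCommGroup N] [Module A N]
    (M : Submodule A N) (hM : Module.Flat A ↥M) (hQ : Module.Flat A (N ⧸ M)) :
    Module.Flat A N := by
  haveI := hM; haveI := hQ
  rw [Module.Flat.iff_rTensor_injective']
  intro I
  rw [← LinearMap.ker_eq_bot, eq_bot_iff]
  intro t ht
  rw [LinearMap.mem_ker] at ht
  have h1 : LinearMap.lTensor (↥I) M.mkQ t = 0 := by
    have hinj : Function.Injective (LinearMap.rTensor (N ⧸ M) I.subtype) :=
      Module.Flat.iff_rTensor_injective'.mp hQ I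
    apply hinj
    rw [map_zero, ← LinearMap.comp_apply, LinearMap.rTensor_comp_lTensor,
      ← LinearMap.lTensor_comp_rTensor, LinearMap.comp_apply, ht, map_zero]
  obtain ⟨s, hs⟩ :=
    ((lTensor_exact (R := A) (M := ↥M) (N := N) (↥I)
      (LinearMap.exact_subtype_mkQ M) (Submodule.mkQ_surjective M)) t).mp h1
  have h2 : LinearMap.rTensor (↥M) I.subtype s = 0 := by
    have hinj : Function.Injective (LinearMap.lTensor A M.subtype) :=
      Module.Flat.lTensor_preserves_injective_linearMap (M := A) M.subtype
        (Submodule.injective_subtype _)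
    apply hinj
    rw [map_zero, ← LinearMap.comp_apply, LinearMap.lTensor_comp_rTensor,
      ← LinearMap.rTensor_comp_lTensor, LinearMap.comp_apply, hs, ht]
  have : s = 0 := by
    have hinj : Function.Injective (LinearMap.rTensor (↥M) I.subtype) :=
      Module.Flat.iff_rTensor_injective'.mp hM I
    exact hinj (by rw [h2, map_zero])
  simp [← hs, this]

end Helpers

section Core

/-- The explicit homology `ker g ⧸ im f` of a short complex of modules. -/
noncomputable abbrev CategoryTheory.ShortComplex.moduleCatHomology {R : Type u} [Ring R]
    (S : ShortComplex (ModuleCat.{u} R)) : ModuleCat.{u} R :=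
  S.moduleCatLeftHomologyData.H

variable {A : Type u} [CommRing A]

/-- The tensor product of a short complex of modules with a module `F`. -/
noncomputable def tensorShortComplex (S : ShortComplex (ModuleCat.{u} A))
    (F : Type u) [AddCommGroup F] [Module A F] : ShortComplex (ModuleCat.{u} A) :=
  ShortComplex.moduleCatMk (LinearMap.rTensor F S.f.hom) (LinearMap.rTensor F S.g.hom)
    (by
      rw [← LinearMap.rTensor_comp]
      have : S.g.hom.comp S.f.hom = 0 := by
        ext x
        exact S.moduleCat_zero_apply x
      rw [this, LinearMap.rTensor_zero])

/-- The key algebraic lemma: if cycles of `S` tensor well with `F`, then the homology of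
`S ⊗ F` is the homology of `S` tensored with `F`. -/
noncomputable def coreEquiv (S : ShortComplex (ModuleCat.{u} A))
    (F : Type u) [AddCommGroup F] [Module A F]
    (h1 : Function.Injective (LinearMap.rTensor F (LinearMap.ker S.g.hom).subtype))
    (h2 : LinearMap.ker (LinearMap.rTensor F S.g.hom)
      ≤ LinearMap.range (LinearMap.rTensor F (LinearMap.ker S.g.hom).subtype)) :
    ((tensorShortComplex S F).moduleCatHomology) ≃ₗ[A] (S.moduleCatHomology ⊗[A] F) := by
  classical
  set Zg := LinearMap.ker S.g.hom with hZg
  set ι : ↥Zg →ₗ[A] S.X₂ := Zg.subtype with hι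
  set T := tensorShortComplex S F with hT
  -- range of `rTensor F ι` is the cycles of the tensored complex
  have hcompg : S.g.hom.comp ι = 0 := by
    ext ⟨z, hz⟩; exact hz
  have hg2 : (LinearMap.rTensor F S.g.hom).comp (LinearMap.rTensor F ι)
      = 0 := by
    rw [← LinearMap.rTensor_comp, hcompg, LinearMap.rTensor_zero]
  have hrange : LinearMap.range (LinearMap.rTensor F ι)
      = LinearMap.ker T.g.hom := by
    apply le_antisymm
    · rintro _ ⟨u, rfl⟩
      show LinearMap.rTensor F ι u ∈
        LinearMap.ker (LinearMap.rTensor F S.g.hom)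
      rw [LinearMap.mem_ker, ← LinearMap.comp_apply, hg2, LinearMap.zero_apply]
    · exact h2
  -- the equivalence `Zg ⊗ F ≃ cycles of T`
  let e0 : (↥Zg ⊗[A] F) ≃ₗ[A] ↥(LinearMap.range (LinearMap.rTensor F ι)) :=
    LinearEquiv.ofInjective _ h1
  let e : (↥Zg ⊗[A] F) ≃ₗ[A] ↥(LinearMap.ker T.g.hom) :=
    e0.trans (LinearEquiv.ofEq _ _ hrange)
  have he : ∀ (w : ↥Zg ⊗[A] F), ((e w : T.X₂)) = LinearMap.rTensor F ι w := fun w => rfl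
  have hcompS : ι.comp S.moduleCatToCycles = S.f.hom := by
    ext x; rfl
  have hcomp2 : (LinearMap.rTensor F ι).comp (LinearMap.rTensor F S.moduleCatToCycles)
      = LinearMap.rTensor F S.f.hom := by
    rw [← LinearMap.rTensor_comp, hcompS]
  have hvalT : ∀ (u : T.X₁), ((T.moduleCatToCycles u : T.X₂))
      = LinearMap.rTensor F S.f.hom u := fun u => rfl
  -- `e` matches boundaries with boundaries
  have hmap : (LinearMap.range (LinearMap.rTensor F S.moduleCatToCycles)).map e.toLinearMap
      = LinearMap.range T.moduleCatToCycles := by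
    apply le_antisymm
    · rintro _ ⟨_, ⟨u, rfl⟩, rfl⟩
      refine ⟨u, Subtype.ext ?_⟩
      exact (LinearMap.congr_fun hcomp2 u).symm
    · rintro _ ⟨u, rfl⟩
      refine ⟨LinearMap.rTensor F S.moduleCatToCycles u, ⟨u, rfl⟩, Subtype.ext ?_⟩
      exact LinearMap.congr_fun hcomp2 u
  -- quotient equivalence
  let q1 : ((↥Zg ⊗[A] F) ⧸ LinearMap.range (LinearMap.rTensor F S.moduleCatToCycles))
      ≃ₗ[A] (↥(LinearMap.ker T.g.hom)
        ⧸ LinearMap.range T.moduleCatToCycles) :=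
    Submodule.Quotient.equiv _ _ e hmap
  -- right exactness
  let q2 : ((↥Zg ⊗[A] F) ⧸ LinearMap.range (LinearMap.rTensor F S.moduleCatToCycles))
      ≃ₗ[A] ((↥Zg ⧸ LinearMap.range S.moduleCatToCycles) ⊗[A] F) :=
    rTensor.equiv (R := A) (M := S.X₁) (N := ↥Zg)
      (P := ↥Zg ⧸ LinearMap.range S.moduleCatToCycles) F
      (LinearMap.exact_map_mkQ_range S.moduleCatToCycles)
      (Submodule.mkQ_surjective _)
  exact q1.symm.trans q2

end Core

section Induction

variable {A : Type u} [CommRing A]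

/-- Both flatness statements hold trivially when `K.X j` is zero. -/
theorem pkg_of_isZero (K : CochainComplex (ModuleCat.{u} A) ℤ) (i j : ℤ)
    (hz : IsZero (K.X j)) :
    Module.Flat A ↥(LinearMap.range (K.d i j).hom)
    ∧ Module.Flat A ((K.X j) ⧸ LinearMap.range (K.d i j).hom) := by
  have hs : ∀ a : K.X j, a = 0 := by
    intro a
    have h1 : (𝟙 (K.X j) : K.X j ⟶ K.X j) = 0 := hz.eq_of_src _ _
    have h2 : (𝟙 (K.X j) : K.X j ⟶ K.X j) a = (0 : K.X j ⟶ K.X j) a := by rw [h1]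
    simpa using h2
  haveI : Subsingleton (K.X j) := ⟨fun a b => by rw [hs a, hs b]⟩
  haveI : Subsingleton ↥(LinearMap.range (K.d i j).hom) :=
    ⟨fun a b => Subtype.ext (by rw [hs a.1, hs b.1])⟩
  haveI : Subsingleton ((K.X j) ⧸ LinearMap.range (K.d i j).hom) :=
    Function.Surjective.subsingleton (Submodule.mkQ_surjective _)
  exact ⟨inferInstance, inferInstance⟩

set_option maxHeartbeats 800000 in
/-- The inductive step: flatness of the image and coimage propagates downwards. -/
theorem pkg_step (K : CochainComplex (ModuleCat.{u} A) ℤ) {i j : ℤ} (hij : i + 1 = j)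
    (hKj : Module.Flat A (K.X j))
    (FB' : Module.Flat A ↥(LinearMap.range (K.d j (j+1)).hom))
    (hH : Projective (K.homology j)) :
    Module.Flat A ↥(LinearMap.range (K.d i j).hom)
    ∧ Module.Flat A ((K.X j) ⧸ LinearMap.range (K.d i j).hom) := by
  classical
  haveI := hKj; haveI := FB'
  set g : K.X j →ₗ[A] K.X (j+1) := (K.d j (j+1)).hom with hg
  set Z : Submodule A (K.X j) := LinearMap.ker g with hZ
  -- step 1 : `K.X j ⧸ Z` is flat
  have s1 : Module.Flat A ((K.X j) ⧸ Z) :=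
    Module.Flat.of_linearEquiv (LinearMap.quotKerEquivRange g)
  -- step 2 : `Z` is flat
  have s2 : Module.Flat A ↥Z := flat_submodule_of_flat_quotient Z hKj s1
  -- the homology at `j` as an explicit quotient
  have hi : (ComplexShape.up ℤ).prev j = i := by rw [CochainComplex.prev]; omega
  have hk : (ComplexShape.up ℤ).next j = j + 1 := by rw [CochainComplex.next]
  set S := K.sc' i j (j+1) with hS
  set tc : K.X i →ₗ[A] ↥Z := S.moduleCatToCycles with htc
  have hproj' : Module.Projective A (↥Z ⧸ LinearMap.range tc) := by
    haveI : Projective S.moduleCatHomology :=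
      Projective.of_iso ((K.homologyIsoSc' i j (j+1) hi hk).trans S.moduleCatHomologyIso) hH
    exact (IsProjective.iff_projective (R := A)
      (P := ↥Z ⧸ LinearMap.range tc)).mpr this
  -- step 4 : the boundaries form a flat submodule of `Z`
  obtain ⟨σ, hσ⟩ := Module.projective_lifting_property (h := hproj')
    (LinearMap.range tc).mkQ LinearMap.id (Submodule.mkQ_surjective _)
  have hr : ∀ z : ↥Z, z - σ ((LinearMap.range tc).mkQ z) ∈ LinearMap.range tc := by
    intro z
    rw [← Submodule.Quotient.mk_eq_zero]
    have : ((LinearMap.range tc).mkQ.comp σ) ((LinearMap.range tc).mkQ z)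
        = (LinearMap.range tc).mkQ z := by rw [hσ]; rfl
    show (LinearMap.range tc).mkQ _ = 0
    rw [map_sub, ← LinearMap.comp_apply, hσ, LinearMap.id_apply, sub_self]
  set r : ↥Z →ₗ[A] ↥(LinearMap.range tc) :=
    LinearMap.codRestrict _ (LinearMap.id - σ.comp (LinearMap.range tc).mkQ) hr with hrdef
  have hretr : r.comp (LinearMap.range tc).subtype = LinearMap.id := by
    ext b
    have hb0 : (LinearMap.range tc).mkQ (b : ↥Z) = 0 :=
      (Submodule.Quotient.mk_eq_zero _).mpr b.2
    show ((((b : ↥Z) - σ ((LinearMap.range tc).mkQ (b : ↥Z))) : ↥Z) : K.X j)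
      = (((b : ↥Z) : K.X j))
    rw [hb0, map_zero, sub_zero]
  have s4 : Module.Flat A ↥(LinearMap.range tc) :=
    Module.Flat.of_retract (R := A) (M := ↥Z) (N := ↥(LinearMap.range tc))
      (LinearMap.range tc).subtype r hretr
  -- step 5 : flatness of the image of `K.d i j`
  have hd : Z.subtype.comp tc = (K.d i j).hom := by ext x; rfl
  have hrange_eq : LinearMap.range (K.d i j).hom
      = Submodule.map Z.subtype (LinearMap.range tc) := by
    rw [← hd, LinearMap.range_comp]
  have out1 : Module.Flat A ↥(LinearMap.range (K.d i j).hom) := by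
    rw [hrange_eq]
    haveI := s4
    exact Module.Flat.of_linearEquiv
      (Submodule.equivMapOfInjective Z.subtype (Submodule.injective_subtype Z) _).symm
  -- step 6 : flatness of the coimage
  set B : Submodule A (K.X j) := LinearMap.range (K.d i j).hom with hB
  have hBZ : B ≤ Z := by
    rintro _ ⟨x, rfl⟩
    show ((K.d i j).hom x) ∈ LinearMap.ker g
    rw [LinearMap.mem_ker]
    have hdd : (K.d i j ≫ K.d j (j+1) : K.X i ⟶ K.X (j+1)) = 0 := K.d_comp_d i j (j+1)
    calc g ((K.d i j).hom x)
        = (K.d i j ≫ K.d j (j+1) : K.X i ⟶ K.X (j+1)) x := rfl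
      _ = (0 : K.X i ⟶ K.X (j+1)) x := by rw [hdd]
      _ = 0 := rfl
  set M' : Submodule A ((K.X j) ⧸ B) := Submodule.map B.mkQ Z with hM'
  set φ : ↥Z →ₗ[A] ((K.X j) ⧸ B) := B.mkQ.comp Z.subtype with hφ
  have hφrange : LinearMap.range φ = M' := by
    rw [hφ, LinearMap.range_comp, Submodule.range_subtype]
  have hφker : LinearMap.ker φ = LinearMap.range tc := by
    ext z
    constructor
    · intro hzk
      rw [LinearMap.mem_ker, hφ, LinearMap.comp_apply] at hzk
      have : (z : K.X j) ∈ B := by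
        have := (Submodule.Quotient.mk_eq_zero B).mp hzk
        exact this
      obtain ⟨x, hx⟩ := this
      exact ⟨x, Subtype.ext hx⟩
    · rintro ⟨x, rfl⟩
      rw [LinearMap.mem_ker, hφ, LinearMap.comp_apply]
      exact (Submodule.Quotient.mk_eq_zero B).mpr ⟨x, rfl⟩
  have flatM' : Module.Flat A ↥M' := by
    haveI := hproj'
    haveI : Module.Flat A (↥Z ⧸ LinearMap.range tc) := inferInstance
    exact Module.Flat.of_linearEquiv
      (((Submodule.quotEquivOfEq _ _ hφker.symm).trans
        ((LinearMap.quotKerEquivRange φ).trans (LinearEquiv.ofEq _ _ hφrange))).symm)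
  have flatQQ : Module.Flat A (((K.X j) ⧸ B) ⧸ M') :=
    Module.Flat.of_linearEquiv (Submodule.quotientQuotientEquivQuotient B Z hBZ)
  have out2 : Module.Flat A ((K.X j) ⧸ B) :=
    flat_of_flat_submodule_flat_quotient M' flatM' flatQQ
  exact ⟨out1, out2⟩

end Induction

set_option maxHeartbeats 1000000 in
/-- Let `A` be a commutative ring, `K` a bounded cochain complex of flat
`A`-modules with `K^j = 0` for `j < 0`, and `c ≥ 0` an integer such that `H^j(K)` is a
projective `A`-module for every `j > c`.  Then for every `A`-module `F` there is an
isomorphism of `A`-modules `H^c(K ⊗_A F) ≅ H^c(K) ⊗_A F`. -/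
theorem homology_tensor_of_projective_above {A : Type u} [CommRing A]
    (K : CochainComplex (ModuleCat.{u} A) ℤ)
    (hflat : ∀ j : ℤ, Module.Flat A (K.X j))
    (hK0 : ∀ j : ℤ, j < 0 → IsZero (K.X j))
    (hbdd : ∃ b : ℤ, ∀ j : ℤ, b < j → IsZero (K.X j))
    (c : ℤ) (hc : 0 ≤ c)
    (hproj : ∀ j : ℤ, c < j → Projective (K.homology j))
    (F : Type u) [AddCommGroup F] [Module A F] :
    Nonempty (((tensorComplex K F).homology c) ≃ₗ[A] ((K.homology c) ⊗[A] F)) := by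
  
  classical
  obtain ⟨b, hb⟩ := hbdd
  have pkg : ∀ n : ℕ, ∀ i j : ℤ, i + 1 = j → c < j → b < j + n →
      Module.Flat A ↥(LinearMap.range (K.d i j).hom)
      ∧ Module.Flat A ((K.X j) ⧸ LinearMap.range (K.d i j).hom) := by
    intro n
    induction n with
    | zero =>
      intro i j hij hcj hbj
      exact pkg_of_isZero K i j (hb j (by simpa using hbj))
    | succ n ih =>
      intro i j hij hcj hbj
      by_cases hbj' : b < j
      · exact pkg_of_isZero K i j (hb j hbj')
      · have h1 := ih j (j+1) rfl (by omega) (by push_cast at hbj ⊢; omega)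
        exact pkg_step K hij (hflat j) h1.1 (hproj j hcj)
  obtain ⟨FB, FQ⟩ := pkg ((b - c).toNat + 1) c (c+1) rfl (by omega)
    (by push_cast; omega)
  haveI := FB; haveI := FQ
  set g : K.X c →ₗ[A] K.X (c+1) := (K.d c (c+1)).hom with hgdef
  set S := K.sc' (c-1) c (c+1) with hSdef
  set T := (tensorComplex K F).sc' (c-1) c (c+1) with hTdef
  have hi : (ComplexShape.up ℤ).prev c = c - 1 := by rw [CochainComplex.prev]
  have hk : (ComplexShape.up ℤ).next c = c + 1 := by rw [CochainComplex.next]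
  -- `S.g = g`
  have hq : Module.Flat A ((K.X c) ⧸ LinearMap.ker g) :=
    Module.Flat.of_linearEquiv (LinearMap.quotKerEquivRange g)
  have h1 : Function.Injective
      (LinearMap.rTensor F (LinearMap.ker S.g.hom).subtype) :=
    rTensor_subtype_injective_of_flat_quotient _ hq
  have h2 : LinearMap.ker (LinearMap.rTensor F S.g.hom)
      ≤ LinearMap.range (LinearMap.rTensor F
          (LinearMap.ker S.g.hom).subtype) := by
    have hinj3 : Function.Injective (LinearMap.rTensor F (LinearMap.range g).subtype) :=
      rTensor_subtype_injective_of_flat_quotient _ FQ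
    have hfact : (LinearMap.range g).subtype.comp g.rangeRestrict = g := by ext x; rfl
    have hex0 : Function.Exact ((LinearMap.ker g).subtype) g.rangeRestrict := by
      rw [LinearMap.exact_iff, LinearMap.ker_rangeRestrict, Submodule.range_subtype]
    have hexact : Function.Exact (LinearMap.rTensor F (LinearMap.ker g).subtype)
        (LinearMap.rTensor F g.rangeRestrict) :=
      rTensor_exact (R := A) (M := ↥(LinearMap.ker g)) (N := K.X c)
        F hex0 g.surjective_rangeRestrict
    intro t ht
    rw [LinearMap.mem_ker] at ht
    have ht2 : LinearMap.rTensor F g.rangeRestrict t = 0 := by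
      apply hinj3
      rw [map_zero]
      change ((LinearMap.rTensor F (LinearMap.range g).subtype).comp
        (LinearMap.rTensor F g.rangeRestrict)) t = 0
      rw [← LinearMap.rTensor_comp, hfact]
      exact ht
    exact (hexact t).mp ht2
  refine ⟨?_⟩
  have E1 : ((tensorComplex K F).homology c) ≃ₗ[A] T.moduleCatHomology :=
    ((((tensorComplex K F).homologyIsoSc' (c-1) c (c+1) hi hk)).trans
      T.moduleCatHomologyIso).toLinearEquiv
  have hTS : T = tensorShortComplex S F := rfl
  have E2 : T.moduleCatHomology ≃ₗ[A] (S.moduleCatHomology ⊗[A] F) :=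
    hTS ▸ coreEquiv S F h1 h2
  have isoS : K.homology c ≅ S.moduleCatHomology :=
    (K.homologyIsoSc' (c-1) c (c+1) hi hk).trans S.moduleCatHomologyIso
  have E3 : (S.moduleCatHomology ⊗[A] F) ≃ₗ[A] ((K.homology c) ⊗[A] F) :=
    TensorProduct.congr isoS.toLinearEquiv.symm (LinearEquiv.refl A F)
  exact (E1.trans E2).trans E3
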